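/- Let f : ℝ → ℝ be a twice continuously differentiable function with compact support, and let σ(z) = max(z, 0) be the ReLU function. Then for every x ∈ ℝ, f(x) = ∫₀^{2π} (f''(−tan φ) / (2·|cos φ|³)) · σ(x·cos φ + sin φ) dφ. -/

import Mathlib

open MeasureTheory Real Set Filter Topology

private lemma int_left (f : ℝ → ℝ) (hfd : Differentiable ℝ f)
    (hf'd : Differentiable ℝ (deriv f)) (hgc : Continuous (deriv (deriv f)))
    (hs1 : HasCompactSupport f) (hs2 : HasCompactSupport (deriv f))
    (hs3 : HasCompactSupport (deriv (deriv f))) (x : ℝ) :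
    ∫ t in Iic x, deriv (deriv f) t * (x - t) = f x := by
  have hderiv : ∀ t ∈ Iic x, HasDerivAt (fun t => deriv f t * (x - t) + f t)
      (deriv (deriv f) t * (x - t)) t := by
    intro t _
    have h1 : HasDerivAt (deriv f) (deriv (deriv f) t) t := (hf'd t).hasDerivAt
    have h2 : HasDerivAt (fun t : ℝ => x - t) (-1) t := by
      simpa using (hasDerivAt_id t).const_sub x
    have h3 : HasDerivAt f (deriv f t) t := (hfd t).hasDerivAt
    have : HasDerivAt (fun t => deriv f t * (x - t) + f t)
        (deriv (deriv f) t * (x - t) + deriv f t * -1 + deriv f t) t := (h1.mul h2).add h3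
    convert this using 1
    ring
  have hint : IntegrableOn (fun t => deriv (deriv f) t * (x - t)) (Iic x) := by
    apply Integrable.integrableOn
    apply Continuous.integrable_of_hasCompactSupport
    · exact hgc.mul (by continuity)
    · exact hs3.mul_right
  have htend : Tendsto (fun t => deriv f t * (x - t) + f t) atBot (𝓝 0) := by
    obtain ⟨R1, hR1pos, hR1⟩ := hs1.exists_pos_le_norm
    obtain ⟨R2, hR2pos, hR2⟩ := hs2.exists_pos_le_norm
    have hev : (fun t => deriv f t * (x - t) + f t) =ᶠ[atBot] fun _ => 0 := by
      filter_upwards [eventually_le_atBot (-(max R1 R2))] with t ht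
      have h1 : f t = 0 := hR1 t (by
        rw [Real.norm_eq_abs]
        calc R1 ≤ max R1 R2 := le_max_left _ _
        _ ≤ -t := by linarith
        _ ≤ |t| := neg_le_abs t)
      have h2 : deriv f t = 0 := hR2 t (by
        rw [Real.norm_eq_abs]
        calc R2 ≤ max R1 R2 := le_max_right _ _
        _ ≤ -t := by linarith
        _ ≤ |t| := neg_le_abs t)
      simp [h1, h2]
    rw [tendsto_congr' hev]
    exact tendsto_const_nhds
  have := integral_Iic_of_hasDerivAt_of_tendsto' hderiv hint htend
  simpa using this

private lemma int_right (f : ℝ → ℝ) (hfd : Differentiable ℝ f)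
    (hf'd : Differentiable ℝ (deriv f)) (hgc : Continuous (deriv (deriv f)))
    (hs1 : HasCompactSupport f) (hs2 : HasCompactSupport (deriv f))
    (hs3 : HasCompactSupport (deriv (deriv f))) (x : ℝ) :
    ∫ t in Ioi x, deriv (deriv f) t * (t - x) = f x := by
  have hderiv : ∀ t ∈ Ici x, HasDerivAt (fun t => deriv f t * (t - x) - f t)
      (deriv (deriv f) t * (t - x)) t := by
    intro t _
    have h1 : HasDerivAt (deriv f) (deriv (deriv f) t) t := (hf'd t).hasDerivAt
    have h2 : HasDerivAt (fun t : ℝ => t - x) 1 t := by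
      simpa using (hasDerivAt_id t).sub_const x
    have h3 : HasDerivAt f (deriv f t) t := (hfd t).hasDerivAt
    have : HasDerivAt (fun t => deriv f t * (t - x) - f t)
        (deriv (deriv f) t * (t - x) + deriv f t * 1 - deriv f t) t := (h1.mul h2).sub h3
    convert this using 1
    ring
  have hint : IntegrableOn (fun t => deriv (deriv f) t * (t - x)) (Ioi x) := by
    apply Integrable.integrableOn
    apply Continuous.integrable_of_hasCompactSupport
    · exact hgc.mul (by continuity)
    · exact hs3.mul_right
  have htend : Tendsto (fun t => deriv f t * (t - x) - f t) atTop (𝓝 0) := by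
    obtain ⟨R1, hR1pos, hR1⟩ := hs1.exists_pos_le_norm
    obtain ⟨R2, hR2pos, hR2⟩ := hs2.exists_pos_le_norm
    have hev : (fun t => deriv f t * (t - x) - f t) =ᶠ[atTop] fun _ => 0 := by
      filter_upwards [eventually_ge_atTop (max R1 R2)] with t ht
      have h1 : f t = 0 := hR1 t (by
        rw [Real.norm_eq_abs]
        calc R1 ≤ max R1 R2 := le_max_left _ _
        _ ≤ t := ht
        _ ≤ |t| := le_abs_self t)
      have h2 : deriv f t = 0 := hR2 t (by
        rw [Real.norm_eq_abs]
        calc R2 ≤ max R1 R2 := le_max_right _ _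
        _ ≤ t := ht
        _ ≤ |t| := le_abs_self t)
      simp [h1, h2]
    rw [tendsto_congr' hev]
    exact tendsto_const_nhds
  have := integral_Ioi_of_hasDerivAt_of_tendsto'
    (f := fun t => deriv f t * (t - x) - f t) hderiv hint htend
  simpa using this

private lemma subst1 (g1 : ℝ → ℝ) :
    ∫ t, g1 t = ∫ u in Ioo (-(π/2)) (π/2), |1 / cos u ^ 2| * g1 (-tan u) := by
  have himg : (fun u : ℝ => -tan u) '' Ioo (-(π/2)) (π/2) = univ := by
    rw [show (fun u : ℝ => -tan u) = Neg.neg ∘ tan from rfl, image_comp,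
      Real.image_tan_Ioo, image_univ, neg_surjective.range_eq]
  have hder : ∀ u ∈ Ioo (-(π/2)) (π/2),
      HasDerivWithinAt (fun u : ℝ => -tan u) (-(1 / cos u ^ 2)) (Ioo (-(π/2)) (π/2)) u := by
    intro u hu
    exact ((Real.hasDerivAt_tan (Real.cos_pos_of_mem_Ioo hu).ne').neg).hasDerivWithinAt
  have hinj : InjOn (fun u : ℝ => -tan u) (Ioo (-(π/2)) (π/2)) :=
    fun a ha b hb h => Real.injOn_tan ha hb (neg_injective h)
  have := integral_image_eq_integral_abs_deriv_smul measurableSet_Ioo hder hinj g1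
  rw [himg] at this
  simpa [abs_neg] using this

private lemma subst2 (g1 : ℝ → ℝ) :
    ∫ t, g1 t = ∫ u in Ioo (π/2) (π + π/2), |1 / cos u ^ 2| * g1 (-tan u) := by
  have hcosne : ∀ u ∈ Ioo (π/2) (π + π/2), cos u ≠ 0 := fun u hu =>
    (Real.cos_neg_of_pi_div_two_lt_of_lt hu.1 hu.2).ne
  have himg : (fun u : ℝ => -tan u) '' Ioo (π/2) (π + π/2) = univ := by
    apply eq_univ_of_forall
    intro y
    have hy : -y ∈ tan '' Ioo (-(π/2)) (π/2) := by rw [Real.image_tan_Ioo]; trivial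
    obtain ⟨u, hu, hu2⟩ := hy
    obtain ⟨hu1, hu2'⟩ := hu
    refine ⟨u + π, ⟨by linarith, by linarith⟩, ?_⟩
    simp only [Real.tan_add_pi, hu2, neg_neg]
  have hder : ∀ u ∈ Ioo (π/2) (π + π/2),
      HasDerivWithinAt (fun u : ℝ => -tan u) (-(1 / cos u ^ 2)) (Ioo (π/2) (π + π/2)) u := by
    intro u hu
    exact ((Real.hasDerivAt_tan (hcosne u hu)).neg).hasDerivWithinAt
  have hinj : InjOn (fun u : ℝ => -tan u) (Ioo (π/2) (π + π/2)) := by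
    intro a ha b hb h
    have ha' : a - π ∈ Ioo (-(π/2)) (π/2) := ⟨by linarith [ha.1], by linarith [ha.2]⟩
    have hb' : b - π ∈ Ioo (-(π/2)) (π/2) := ⟨by linarith [hb.1], by linarith [hb.2]⟩
    have heq : tan (a - π) = tan (b - π) := by
      rw [Real.tan_sub_pi, Real.tan_sub_pi]; exact neg_injective h
    have := Real.injOn_tan ha' hb' heq
    linarith
  have := integral_image_eq_integral_abs_deriv_smul measurableSet_Ioo hder hinj g1
  rw [himg] at this
  simpa [abs_neg] using this

/-- For a compactly supported `C²` function `f : ℝ → ℝ` and the ReLU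
activation `σ(z) = max z 0`, one has
`f(x) = ∫₀^{2π} f''(-tan φ) / (2 |cos φ|³) · σ(x cos φ + sin φ) dφ`.
(Where `cos φ = 0` the integrand is `0`, which here is automatic from the
division-by-zero convention.) -/
theorem statement0 (f : ℝ → ℝ) (hf : ContDiff ℝ 2 f) (hsupp : HasCompactSupport f) (x : ℝ) :
    f x = ∫ φ in (0:ℝ)..(2 * Real.pi),
      deriv (deriv f) (-Real.tan φ) / (2 * |Real.cos φ| ^ 3) *
        max (x * Real.cos φ + Real.sin φ) 0 := by
  have hfd : Differentiable ℝ f := hf.differentiable two_ne_zero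
  rw [show (2 : WithTop ℕ∞) = 1 + 1 by norm_num] at hf
  have hf1 : ContDiff ℝ 1 (deriv f) := (contDiff_succ_iff_deriv.mp hf).2.2
  have hf'd : Differentiable ℝ (deriv f) := hf1.differentiable one_ne_zero
  have hgc : Continuous (deriv (deriv f)) := hf1.continuous_deriv le_rfl
  have hs2 : HasCompactSupport (deriv f) := hsupp.deriv
  have hs3 : HasCompactSupport (deriv (deriv f)) := hs2.deriv
  have hpi := Real.pi_pos
  set F : ℝ → ℝ := fun φ =>
    deriv (deriv f) (-tan φ) / (2 * |cos φ| ^ 3) * max (x * cos φ + sin φ) 0 with hF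
  obtain ⟨R, hRpos, hR⟩ := hs3.exists_pos_le_norm
  -- continuity of the integrand
  have hFcont : Continuous F := by
    rw [continuous_iff_continuousAt]
    intro φ₀
    by_cases h : cos φ₀ = 0
    · have hsin : 1/2 < |sin φ₀| := by
        nlinarith [sin_sq_add_cos_sq φ₀, sq_abs (sin φ₀), abs_nonneg (sin φ₀)]
      have h1 : ∀ᶠ φ in 𝓝 φ₀, 1/2 < |sin φ| :=
        (continuous_sin.abs.continuousAt).eventually (eventually_gt_nhds hsin)
      have h2 : ∀ᶠ φ in 𝓝 φ₀, |cos φ| < 1/(2*R) := by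
        have h0 : |cos φ₀| < 1/(2*R) := by rw [h, abs_zero]; positivity
        exact (continuous_cos.abs.continuousAt).eventually (eventually_lt_nhds h0)
      apply Filter.EventuallyEq.continuousAt (y := 0)
      filter_upwards [h1, h2] with φ hφ1 hφ2
      by_cases hc : cos φ = 0
      · simp [hF, hc]
      · have htan : R ≤ |tan φ| := by
          rw [Real.tan_eq_sin_div_cos, abs_div, le_div_iff₀ (abs_pos.mpr hc)]
          have e1 : R * |cos φ| < R * (1/(2*R)) := mul_lt_mul_of_pos_left hφ2 hRpos
          have e2 : R * (1/(2*R)) = 1/2 := by field_simp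
          linarith
        have hg0 : deriv (deriv f) (-tan φ) = 0 :=
          hR _ (by rw [Real.norm_eq_abs, abs_neg]; exact htan)
        simp [hF, hg0]
    · have h1 : ContinuousAt tan φ₀ := Real.continuousAt_tan.mpr h
      have habs : (0:ℝ) < |cos φ₀| := abs_pos.mpr h
      apply ContinuousAt.mul
      · apply ContinuousAt.div
        · exact hgc.continuousAt.comp h1.neg
        · fun_prop
        · positivity
      · fun_prop
  -- periodicity
  have hper : Function.Periodic F (2*π) := by
    intro φ
    simp only [hF]
    rw [show φ + 2*π = φ + π + π by ring, Real.tan_add_pi, Real.tan_add_pi,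
      show φ + π + π = φ + 2*π by ring, Real.cos_add_two_pi, Real.sin_add_two_pi]
  have hint1 : IntervalIntegrable F volume (-(π/2)) (π/2) := hFcont.intervalIntegrable _ _
  have hint2 : IntervalIntegrable F volume (π/2) (-(π/2) + 2*π) := hFcont.intervalIntegrable _ _
  have e0 : ∫ φ in (0:ℝ)..(2*π), F φ = ∫ φ in (-(π/2))..(-(π/2) + 2*π), F φ := by
    simpa using hper.intervalIntegral_add_eq 0 (-(π/2))
  have esplit : ∫ φ in (-(π/2))..(-(π/2)+2*π), F φ
      = (∫ φ in (-(π/2))..(π/2), F φ) + ∫ φ in (π/2)..(-(π/2)+2*π), F φ :=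
    (intervalIntegral.integral_add_adjacent_intervals hint1 hint2).symm
  have eIoo1 : ∫ φ in (-(π/2))..(π/2), F φ = ∫ φ in Ioo (-(π/2)) (π/2), F φ := by
    rw [intervalIntegral.integral_of_le (by linarith), integral_Ioc_eq_integral_Ioo]
  have eIoo2 : ∫ φ in (π/2)..(-(π/2)+2*π), F φ = ∫ φ in Ioo (π/2) (π + π/2), F φ := by
    rw [intervalIntegral.integral_of_le (by linarith), integral_Ioc_eq_integral_Ioo,
      show -(π/2) + 2*π = π + π/2 by ring]
  -- pointwise rewriting on each piece
  have ec1 : ∫ φ in Ioo (-(π/2)) (π/2), F φ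
      = ∫ u in Ioo (-(π/2)) (π/2), |1 / cos u ^ 2| *
          (deriv (deriv f) (-tan u) * max (x - (-tan u)) 0 / 2) := by
    apply setIntegral_congr_fun measurableSet_Ioo
    intro u hu
    have hc : 0 < cos u := Real.cos_pos_of_mem_Ioo hu
    have hc' : cos u ≠ 0 := hc.ne'
    have htan : x * cos u + sin u = cos u * (x - (-tan u)) := by
      rw [Real.tan_eq_sin_div_cos]; field_simp; ring
    simp only [hF]
    rw [htan, abs_of_pos hc,
      show max (cos u * (x - -tan u)) 0 = cos u * max (x - -tan u) 0 by
        rw [mul_max_of_nonneg _ _ hc.le, mul_zero],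
      abs_of_nonneg (by positivity : (0:ℝ) ≤ 1 / cos u ^ 2)]
    field_simp
  have ec2 : ∫ φ in Ioo (π/2) (π + π/2), F φ
      = ∫ u in Ioo (π/2) (π + π/2), |1 / cos u ^ 2| *
          (deriv (deriv f) (-tan u) * max (-tan u - x) 0 / 2) := by
    apply setIntegral_congr_fun measurableSet_Ioo
    intro u hu
    have hc : cos u < 0 := Real.cos_neg_of_pi_div_two_lt_of_lt hu.1 hu.2
    have hc' : cos u ≠ 0 := hc.ne
    have htan : x * cos u + sin u = (-cos u) * (-tan u - x) := by
      rw [Real.tan_eq_sin_div_cos]; field_simp; ring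
    simp only [hF]
    rw [htan, abs_of_neg hc,
      show max (-cos u * (-tan u - x)) 0 = (-cos u) * max (-tan u - x) 0 by
        rw [mul_max_of_nonneg _ _ (by linarith : (0:ℝ) ≤ -cos u), mul_zero],
      abs_of_nonneg (by positivity : (0:ℝ) ≤ 1 / cos u ^ 2)]
    have h1 : deriv (deriv f) (-tan u) / (2 * (-cos u) ^ 3) * (-cos u * ((-tan u - x) ⊔ 0))
        = deriv (deriv f) (-tan u) * cos u * ((-tan u - x) ⊔ 0) / (2 * cos u ^ 3) := by
      rw [div_mul_eq_mul_div,
        div_eq_div_iff (mul_ne_zero two_ne_zero (pow_ne_zero 3 (neg_ne_zero.mpr hc')))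
          (mul_ne_zero two_ne_zero (pow_ne_zero 3 hc'))]
      ring
    rw [h1]
    field_simp
  -- evaluating the two integrals via change of variables
  have eg1 : ∫ u in Ioo (-(π/2)) (π/2), |1 / cos u ^ 2| *
      (deriv (deriv f) (-tan u) * max (x - (-tan u)) 0 / 2) = f x / 2 := by
    have hsub := subst1 (fun t => deriv (deriv f) t * max (x - t) 0 / 2)
    rw [← hsub]
    have e1 : ∫ t, deriv (deriv f) t * max (x - t) 0 / 2
        = ∫ t in Iic x, deriv (deriv f) t * max (x - t) 0 / 2 := by
      refine (setIntegral_eq_integral_of_forall_compl_eq_zero (fun t ht => ?_)).symm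
      have hxt : x < t := lt_of_not_ge ht
      rw [max_eq_right (by linarith : x - t ≤ 0)]
      simp
    rw [e1]
    have e2 : ∫ t in Iic x, deriv (deriv f) t * max (x - t) 0 / 2
        = ∫ t in Iic x, deriv (deriv f) t * (x - t) / 2 := by
      apply setIntegral_congr_fun measurableSet_Iic
      intro t ht
      simp only [mem_Iic] at ht
      dsimp only
      rw [max_eq_left (by linarith : (0:ℝ) ≤ x - t)]
    rw [e2, integral_div, int_left f hfd hf'd hgc hsupp hs2 hs3 x]
  have eg2 : ∫ u in Ioo (π/2) (π + π/2), |1 / cos u ^ 2| *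
      (deriv (deriv f) (-tan u) * max (-tan u - x) 0 / 2) = f x / 2 := by
    have hsub := subst2 (fun t => deriv (deriv f) t * max (t - x) 0 / 2)
    rw [← hsub]
    have e1 : ∫ t, deriv (deriv f) t * max (t - x) 0 / 2
        = ∫ t in Ioi x, deriv (deriv f) t * max (t - x) 0 / 2 := by
      refine (setIntegral_eq_integral_of_forall_compl_eq_zero (fun t ht => ?_)).symm
      have hxt : t ≤ x := le_of_not_gt ht
      rw [max_eq_right (by linarith : t - x ≤ 0)]
      simp
    rw [e1]
    have e2 : ∫ t in Ioi x, deriv (deriv f) t * max (t - x) 0 / 2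
        = ∫ t in Ioi x, deriv (deriv f) t * (t - x) / 2 := by
      apply setIntegral_congr_fun measurableSet_Ioi
      intro t ht
      simp only [mem_Ioi] at ht
      dsimp only
      rw [max_eq_left (by linarith : (0:ℝ) ≤ t - x)]
    rw [e2, integral_div, int_right f hfd hf'd hgc hsupp hs2 hs3 x]
  rw [show (2 * Real.pi) = 2*π from rfl]
  rw [e0, esplit, eIoo1, eIoo2, ec1, ec2, eg1, eg2]
  ring
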